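/- Let c ∈ ℝ^K with not all entries equal, α ∈ ℝ^K, and let B satisfy min_k c_k < B < max_k c_k. Then there exists a unique t* ∈ ℝ such that ⟨softmax(α + t* c), c⟩ = B. -/

import Mathlib

noncomputable def softmax {K : ℕ} (a : Fin K → ℝ) (k : Fin K) : ℝ :=
  Real.exp (a k) / ∑ l, Real.exp (a l)

open Filter Finset Real

/-- Auxiliary function: the expectation of `c` under `softmax (α + t • c)`. -/
noncomputable def phi {K : ℕ} (α c : Fin K → ℝ) (t : ℝ) : ℝ :=
  (∑ k, Real.exp (α k + t * c k) * c k) / (∑ k, Real.exp (α k + t * c k))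

lemma cs_pos {K : ℕ} (w c : Fin K → ℝ) (hw : ∀ k, 0 < w k) {k0 l0 : Fin K} (h : c k0 ≠ c l0) :
    0 < (∑ k, w k * (c k)^2) * (∑ k, w k) - (∑ k, w k * c k)^2 := by
  have key : ∑ k, ∑ l, w k * w l * (c k - c l)^2
      = 2 * ((∑ k, w k * (c k)^2) * (∑ k, w k) - (∑ k, w k * c k)^2) := by
    have h1 : ∀ k : Fin K, ∑ l, w k * w l * (c k - c l)^2
        = w k * (c k)^2 * (∑ l, w l) - 2 * (w k * c k) * (∑ l, w l * c l) + w k * (∑ l, w l * (c l)^2) := by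
      intro k
      have e : ∀ l, w k * w l * (c k - c l)^2
          = w k * (c k)^2 * w l - 2 * (w k * c k) * (w l * c l) + w k * (w l * (c l)^2) :=
        fun l => by ring
      simp_rw [e, Finset.sum_add_distrib, Finset.sum_sub_distrib, ← Finset.mul_sum]
    simp_rw [h1, Finset.sum_add_distrib, Finset.sum_sub_distrib, ← Finset.sum_mul, ← Finset.mul_sum]
    ring
  have hpos : 0 < ∑ k, ∑ l, w k * w l * (c k - c l)^2 := by
    have hne : c k0 - c l0 ≠ 0 := sub_ne_zero.mpr h
    refine Finset.sum_pos'
      (fun k _ => Finset.sum_nonneg fun l _ =>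
        mul_nonneg (mul_nonneg (hw k).le (hw l).le) (sq_nonneg _))
      ⟨k0, Finset.mem_univ _, ?_⟩
    refine Finset.sum_pos'
      (fun l _ => mul_nonneg (mul_nonneg (hw k0).le (hw l).le) (sq_nonneg _))
      ⟨l0, Finset.mem_univ _, ?_⟩
    have h2 : 0 < (c k0 - c l0)^2 := by positivity
    exact mul_pos (mul_pos (hw k0) (hw l0)) h2
  linarith [key ▸ hpos]

lemma phi_tendsto_atTop {K : ℕ} (α c : Fin K → ℝ)
    (hne : (Finset.univ : Finset (Fin K)).Nonempty) :
    Tendsto (phi α c) atTop (nhds (Finset.univ.sup' hne c)) := by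
  set M := Finset.univ.sup' hne c with hM
  obtain ⟨ks, -, hks⟩ := Finset.exists_mem_eq_sup' hne c
  set g : Fin K → ℝ → ℝ := fun k t => Real.exp ((α k - α ks) + t * (c k - M)) with hg
  set L : Fin K → ℝ := fun k => if c k = M then Real.exp (α k - α ks) else 0 with hL
  have hgt : ∀ k, Tendsto (g k) atTop (nhds (L k)) := by
    intro k
    by_cases hck : c k = M
    · have : g k = fun _ => Real.exp (α k - α ks) := by
        funext t; simp [hg, hck]
      rw [this, hL]; simp [hck]
    · have hlt : c k - M < 0 := by
        have : c k ≤ M := Finset.le_sup' c (Finset.mem_univ k)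
        cases lt_or_eq_of_le this with
        | inl h => linarith
        | inr h => exact absurd h hck
      have h1 : Tendsto (fun t : ℝ => (α k - α ks) + t * (c k - M)) atTop atBot :=
        tendsto_atBot_add_const_left atTop (α k - α ks)
          (tendsto_id.atTop_mul_const_of_neg hlt)
      have h2 := Real.tendsto_exp_atBot.comp h1
      simpa [hL, hck, hg, Function.comp_def] using h2
  have hphi : ∀ t, phi α c t = (∑ k, g k t * c k) / (∑ k, g k t) := by
    intro t
    have hpos : (0:ℝ) < Real.exp (α ks + t * M) := Real.exp_pos _
    have e : ∀ k, g k t = Real.exp (α k + t * c k) / Real.exp (α ks + t * M) := by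
      intro k
      rw [hg, ← Real.exp_sub]
      ring_nf
    rw [phi]
    simp_rw [e, div_mul_eq_mul_div, ← Finset.sum_div]
    rw [div_div_div_cancel_right₀ hpos.ne']
  have hnum : Tendsto (fun t => ∑ k, g k t * c k) atTop (nhds (∑ k, L k * c k)) :=
    tendsto_finset_sum _ fun k _ => (hgt k).mul_const _
  have hden : Tendsto (fun t => ∑ k, g k t) atTop (nhds (∑ k, L k)) :=
    tendsto_finset_sum _ fun k _ => hgt k
  have hLpos : 0 < ∑ k, L k := by
    refine Finset.sum_pos' (fun k _ => ?_) ⟨ks, Finset.mem_univ _, ?_⟩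
    · rw [hL]; positivity
    · rw [hL]; simp [← hks, hM]
  have hdiv : Tendsto (fun t => (∑ k, g k t * c k) / (∑ k, g k t)) atTop
      (nhds ((∑ k, L k * c k) / (∑ k, L k))) := hnum.div hden hLpos.ne'
  have hval : (∑ k, L k * c k) / (∑ k, L k) = M := by
    have : ∀ k, L k * c k = M * L k := by
      intro k
      rw [hL]
      by_cases hck : c k = M <;> simp [hck] <;> ring
    simp_rw [this, ← Finset.mul_sum]
    field_simp
  rw [← hval]
  exact hdiv.congr fun t => (hphi t).symm

lemma phi_tendsto_atBot {K : ℕ} (α c : Fin K → ℝ)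
    (hne : (Finset.univ : Finset (Fin K)).Nonempty) :
    Tendsto (phi α c) atBot (nhds (Finset.univ.inf' hne c)) := by
  have hsup : Finset.univ.sup' hne (fun k => -c k) = - Finset.univ.inf' hne c := by
    apply le_antisymm
    · exact Finset.sup'_le _ _ fun k _ => neg_le_neg (Finset.inf'_le _ (Finset.mem_univ k))
    · obtain ⟨ki, -, hki⟩ := Finset.exists_mem_eq_inf' hne c
      rw [hki]
      exact Finset.le_sup' (fun k => -c k) (Finset.mem_univ ki)
  have hneg : ∀ t, phi α (fun k => -c k) t = - phi α c (-t) := by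
    intro t
    rw [phi, phi, ← neg_div]
    have e1 : ∀ k, α k + t * -c k = α k + (-t) * c k := fun k => by ring
    simp_rw [e1, mul_neg, Finset.sum_neg_distrib]
  have h1 := phi_tendsto_atTop α (fun k => -c k) hne
  rw [hsup] at h1
  have h2 : Tendsto (fun t => phi α c (-t)) atTop (nhds (Finset.univ.inf' hne c)) := by
    have := h1.neg
    rw [neg_neg] at this
    exact this.congr fun t => by rw [hneg t, neg_neg]
  have h3 := h2.comp (tendsto_neg_atBot_atTop)
  exact h3.congr fun t => by simp [Function.comp]

lemma phi_hasDerivAt {K : ℕ} (α c : Fin K → ℝ)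
    (hne : (Finset.univ : Finset (Fin K)).Nonempty) (t : ℝ) :
    HasDerivAt (phi α c)
      (((∑ k, Real.exp (α k + t * c k) * (c k)^2) * (∑ k, Real.exp (α k + t * c k))
        - (∑ k, Real.exp (α k + t * c k) * c k)^2) / (∑ k, Real.exp (α k + t * c k))^2) t := by
  have hD : 0 < ∑ k, Real.exp (α k + t * c k) :=
    Finset.sum_pos (fun k _ => Real.exp_pos _) hne
  have hexp : ∀ k : Fin K, HasDerivAt (fun s => Real.exp (α k + s * c k))
      (Real.exp (α k + t * c k) * c k) t := by
    intro k
    have := (((hasDerivAt_id t).mul_const (c k)).const_add (α k)).exp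
    simpa using this
  have hN : HasDerivAt (fun s => ∑ k, Real.exp (α k + s * c k) * c k)
      (∑ k, Real.exp (α k + t * c k) * (c k)^2) t := by
    have := HasDerivAt.fun_sum (u := (Finset.univ : Finset (Fin K)))
      (fun k _ => (hexp k).mul_const (c k))
    refine this.congr_deriv ?_
    exact Finset.sum_congr rfl fun k _ => by ring
  have hDd : HasDerivAt (fun s => ∑ k, Real.exp (α k + s * c k))
      (∑ k, Real.exp (α k + t * c k) * c k) t :=
    HasDerivAt.fun_sum (fun k _ => hexp k)
  have := hN.div hDd hD.ne'
  refine this.congr_deriv ?_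
  ring

lemma phi_strictMono {K : ℕ} (α c : Fin K → ℝ) {k0 l0 : Fin K} (h : c k0 ≠ c l0) :
    StrictMono (phi α c) := by
  have hne : (Finset.univ : Finset (Fin K)).Nonempty := ⟨k0, Finset.mem_univ _⟩
  apply strictMono_of_deriv_pos
  intro t
  rw [(phi_hasDerivAt α c hne t).deriv]
  have hD : 0 < ∑ k, Real.exp (α k + t * c k) :=
    Finset.sum_pos (fun k _ => Real.exp_pos _) hne
  apply div_pos
  · exact cs_pos (fun k => Real.exp (α k + t * c k)) c (fun k => Real.exp_pos _) h
  · positivity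

/-- If the entries of `c` are not all equal and `min_k c_k < B < max_k c_k`, then there is
a unique `t*` with `⟨softmax (α + t* c), c⟩ = B`. -/
theorem stmt5 {K : ℕ} (α c : Fin K → ℝ) (hc : ∃ k l, c k ≠ c l) (B : ℝ)
    (hlo : Finset.univ.inf' (Finset.univ_nonempty_iff.mpr ⟨hc.choose⟩) c < B)
    (hhi : B < Finset.univ.sup' (Finset.univ_nonempty_iff.mpr ⟨hc.choose⟩) c) :
    ∃! t : ℝ, ∑ k, softmax (fun k => α k + t * c k) k * c k = B := by
  obtain ⟨k0, l0, hkl⟩ := hc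
  have hne : (Finset.univ : Finset (Fin K)).Nonempty := ⟨k0, Finset.mem_univ _⟩
  have hform : ∀ t, ∑ k, softmax (fun k => α k + t * c k) k * c k = phi α c t := by
    intro t
    rw [phi]
    simp_rw [softmax, div_mul_eq_mul_div, ← Finset.sum_div]
  have hsm : StrictMono (phi α c) := phi_strictMono α c hkl
  have hcont : Continuous (phi α c) :=
    continuous_iff_continuousAt.mpr fun t => (phi_hasDerivAt α c hne t).continuousAt
  have hhi' : B < Finset.univ.sup' hne c := hhi
  have hlo' : Finset.univ.inf' hne c < B := hlo
  obtain ⟨t2, ht2⟩ := ((phi_tendsto_atTop α c hne).eventually (eventually_gt_nhds hhi')).exists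
  obtain ⟨t1, ht1⟩ := ((phi_tendsto_atBot α c hne).eventually (eventually_lt_nhds hlo')).exists
  have h12 : t1 < t2 := hsm.lt_iff_lt.mp (lt_trans ht1 ht2)
  obtain ⟨t, -, ht⟩ := intermediate_value_Icc h12.le hcont.continuousOn ⟨ht1.le, ht2.le⟩
  refine ⟨t, ?_, fun y hy => ?_⟩
  · show ∑ k, softmax (fun k => α k + t * c k) k * c k = B
    rw [hform]; exact ht
  · have hy' : phi α c y = B := by rw [← hform]; exact hy
    exact hsm.injective (by rw [hy', ht])
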